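/- (Kannan-type fixed point theorem for multiplicative metrics) Let (X,d) be a complete multiplicative metric space and f : X → X satisfy d(f(x), f(y)) ≤ (d(f(x), x) · d(f(y), y))^λ for all x,y ∈ X, where λ ∈ [0, 1/2) is a constant. Then f has a unique fixed point, and for any x ∈ X the iterative sequence (fⁿ(x)) multiplicatively converges to the fixed point. -/
import Mathlib


open Filter Topology

noncomputable def mstar (a : ℝ) : ℝ := if 1 ≤ a then a else a⁻¹

theorem stmt19 {X : Type*} [Nonempty X] (d : X → X → ℝ)
    (h1 : ∀ x y, 1 ≤ d x y) (h2 : ∀ x y, d x y = 1 ↔ x = y)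
    (hsym : ∀ x y, d x y = d y x)
    (htri : ∀ x y z, d x z ≤ d x y * d y z)
    (hcomp : ∀ u : ℕ → X, (∀ ε > 1, ∃ N, ∀ m ≥ N, ∀ n ≥ N, d (u m) (u n) < ε) →
      ∃ z, Tendsto (fun n => d (u n) z) atTop (𝓝 1))
    (f : X → X) (lam : ℝ) (hlam0 : 0 ≤ lam) (hlam1 : lam < 1/2)
    (hf : ∀ x y, d (f x) (f y) ≤ (d (f x) x * d (f y) y) ^ lam) :
    ∃ z, f z = z ∧ (∀ y, f y = y → y = z) ∧
      ∀ x₀, Tendsto (fun n => d (f^[n] x₀) z) atTop (𝓝 1) := by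
  have h1l : (0:ℝ) < 1 - lam := by linarith
  set k := lam / (1 - lam) with hkdef
  have hk0 : 0 ≤ k := div_nonneg hlam0 h1l.le
  have hk1 : k < 1 := by rw [hkdef, div_lt_one h1l]; linarith
  have hdpos : ∀ x y, 0 < d x y := fun x y => lt_of_lt_of_le one_pos (h1 x y)
  set D : X → X → ℝ := fun x y => Real.log (d x y) with hDdef
  have hD0 : ∀ x y, 0 ≤ D x y := fun x y => Real.log_nonneg (h1 x y)
  have hDself : ∀ x, D x x = 0 := by
    intro x; simp [hDdef, (h2 x x).2 rfl]
  have hDeq : ∀ x y, D x y ≤ 0 → x = y := by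
    intro x y h
    have h' := Real.exp_le_exp.2 h
    rw [Real.exp_log (hdpos x y), Real.exp_zero] at h'
    exact (h2 x y).1 (le_antisymm h' (h1 x y))
  have hDsym : ∀ x y, D x y = D y x := fun x y => by simp [hDdef, hsym x y]
  have hDtri : ∀ x y z, D x z ≤ D x y + D y z := by
    intro x y z
    have := Real.log_le_log (hdpos x z) (htri x y z)
    rwa [Real.log_mul (hdpos x y).ne' (hdpos y z).ne'] at this
  have hDf : ∀ x y, D (f x) (f y) ≤ lam * (D (f x) x + D (f y) y) := by
    intro x y
    have hp : 0 < d (f x) x * d (f y) y := mul_pos (hdpos _ _) (hdpos _ _)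
    have := Real.log_le_log (hdpos (f x) (f y)) (hf x y)
    rwa [Real.log_rpow hp, Real.log_mul (hdpos (f x) x).ne' (hdpos (f y) y).ne'] at this
  -- per-step bound
  have hstep : ∀ x₀ : X, ∀ n, D (f^[n+1] x₀) (f^[n] x₀) ≤ k ^ n * D (f x₀) x₀ := by
    intro x₀ n
    induction n with
    | zero => simp
    | succ n ih =>
      have h := hDf (f^[n+1] x₀) (f^[n] x₀)
      rw [← Function.iterate_succ_apply' f (n+1) x₀,
          ← Function.iterate_succ_apply' f n x₀] at h
      have hA : D (f^[n+2] x₀) (f^[n+1] x₀) ≤ k * D (f^[n+1] x₀) (f^[n] x₀) := by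
        rw [hkdef, div_mul_eq_mul_div, le_div_iff₀ h1l]
        nlinarith [h]
      calc D (f^[n+1+1] x₀) (f^[n+1] x₀) ≤ k * D (f^[n+1] x₀) (f^[n] x₀) := hA
        _ ≤ k * (k ^ n * D (f x₀) x₀) := by
            exact mul_le_mul_of_nonneg_left ih hk0
        _ = k ^ (n+1) * D (f x₀) x₀ := by ring
  -- Cauchy-type bound
  have hbound : ∀ x₀ : X, ∀ p n, D (f^[n+p] x₀) (f^[n] x₀) ≤ D (f x₀) x₀ * k ^ n / (1 - k) := by
    intro x₀ p
    have h1k : (0:ℝ) < 1 - k := by linarith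
    induction p with
    | zero =>
      intro n
      simp only [Nat.add_zero, hDself]
      exact div_nonneg (mul_nonneg (hD0 _ _) (pow_nonneg hk0 n)) h1k.le
    | succ p ih =>
      intro n
      have htr : D (f^[n+(p+1)] x₀) (f^[n] x₀) ≤
          D (f^[(n+1)+p] x₀) (f^[n+1] x₀) + D (f^[n+1] x₀) (f^[n] x₀) := by
        have : n + (p+1) = (n+1) + p := by ring
        rw [this]
        exact hDtri _ _ _
      have h2' := ih (n+1)
      have h3' := hstep x₀ n
      have key : D (f x₀) x₀ * k ^ (n+1) / (1-k) + k ^ n * D (f x₀) x₀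
          = D (f x₀) x₀ * k ^ n / (1-k) := by
        field_simp
        ring
      linarith [htr, h2', h3', key.le]
  -- key existence for each starting point
  have key : ∀ x₀ : X, ∃ z, f z = z ∧ Tendsto (fun n => d (f^[n] x₀) z) atTop (𝓝 1) := by
    intro x₀
    have h1k : (0:ℝ) < 1 - k := by linarith
    set a₀ := D (f x₀) x₀ with ha₀def
    have ha₀ : 0 ≤ a₀ := hD0 _ _
    -- Cauchy
    have hc : ∀ ε > 1, ∃ N, ∀ m ≥ N, ∀ n ≥ N, d (f^[m] x₀) (f^[n] x₀) < ε := by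
      intro ε hε
      have hlog : 0 < Real.log ε := Real.log_pos hε
      have htend : Tendsto (fun n : ℕ => a₀ * k ^ n / (1-k)) atTop (𝓝 0) := by
        have := (tendsto_pow_atTop_nhds_zero_of_lt_one hk0 hk1).const_mul a₀
        have := this.div_const (1-k)
        simpa using this
      obtain ⟨N, hN⟩ := Filter.eventually_atTop.1 (htend.eventually (gt_mem_nhds hlog))
      refine ⟨N, ?_⟩
      have hmn : ∀ m n, N ≤ n → n ≤ m → d (f^[m] x₀) (f^[n] x₀) < ε := by
        intro m n hNn hnm
        have hDb : D (f^[m] x₀) (f^[n] x₀) ≤ a₀ * k ^ n / (1-k) := by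
          have := hbound x₀ (m - n) n
          rwa [Nat.add_sub_cancel' hnm] at this
        have hkm : k ^ n ≤ k ^ N := pow_le_pow_of_le_one hk0 hk1.le hNn
        have : D (f^[m] x₀) (f^[n] x₀) < Real.log ε := by
          have h5 : a₀ * k ^ n / (1-k) ≤ a₀ * k ^ N / (1-k) := by
            have h6 : a₀ * k ^ n ≤ a₀ * k ^ N := mul_le_mul_of_nonneg_left hkm ha₀
            exact div_le_div_of_nonneg_right h6 h1k.le
          exact lt_of_le_of_lt (le_trans hDb h5) (hN N le_rfl)
        have := Real.exp_lt_exp.2 this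
        rwa [Real.exp_log (hdpos _ _), Real.exp_log (by linarith : (0:ℝ) < ε)] at this
      intro m hm n hn
      rcases le_total n m with h | h
      · exact hmn m n hn h
      · rw [hsym]; exact hmn n m hm h
    obtain ⟨z, hz⟩ := hcomp _ hc
    have hlogz : Tendsto (fun n => D (f^[n] x₀) z) atTop (𝓝 0) := by
      have := hz.log one_ne_zero
      simpa using this
    -- f z = z
    have hfz : f z = z := by
      have hineq : ∀ n, (1 - lam) * D (f z) z ≤ lam * (k ^ n * a₀) + D (f^[n+1] x₀) z := by
        intro n
        have ht1 : D (f z) z ≤ D (f z) (f^[n+1] x₀) + D (f^[n+1] x₀) z := hDtri _ _ _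
        have ht2 := hDf z (f^[n] x₀)
        rw [← Function.iterate_succ_apply' f n x₀] at ht2
        have ht3 := hstep x₀ n
        have hsym1 : D (f z) (f^[n+1] x₀) = D (f z) (f (f^[n] x₀)) := by
          rw [Function.iterate_succ_apply']
        rw [hsym1] at ht1
        nlinarith [ht1, ht2, ht3, hlam0]
      have htend2 : Tendsto (fun n : ℕ => lam * (k ^ n * a₀) + D (f^[n+1] x₀) z)
          atTop (𝓝 0) := by
        have t1 : Tendsto (fun n : ℕ => lam * (k ^ n * a₀)) atTop (𝓝 0) := by
          have := ((tendsto_pow_atTop_nhds_zero_of_lt_one hk0 hk1).mul_const a₀).const_mul lam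
          simpa using this
        have t2 : Tendsto (fun n : ℕ => D (f^[n+1] x₀) z) atTop (𝓝 0) :=
          hlogz.comp (tendsto_add_atTop_nat 1)
        simpa using t1.add t2
      have hle : (1 - lam) * D (f z) z ≤ 0 := ge_of_tendsto' htend2 hineq
      have hDz : D (f z) z ≤ 0 := by nlinarith [hD0 (f z) z]
      exact hDeq _ _ hDz
    exact ⟨z, hfz, hz⟩
  obtain ⟨z, hz1, hz2⟩ := key (Classical.arbitrary X)
  have huniq : ∀ y, f y = y → y = z := by
    intro y hy
    have h := hf y z
    rw [hy, hz1, (h2 y y).2 rfl, (h2 z z).2 rfl, one_mul, Real.one_rpow] at h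
    exact (h2 y z).1 (le_antisymm h (h1 y z))
  refine ⟨z, hz1, huniq, ?_⟩
  intro x₀
  obtain ⟨z', hz'1, hz'2⟩ := key x₀
  rwa [huniq z' hz'1] at hz'2
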